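/- Let x, y ∈ P have a common upper bound in P with respect to ≤, and let z ∈ P be a least upper bound of x and y. If θ(y) > θ(x), then there exists t ∈ ℕ such that z = y·b^t. -/

import Mathlib

open scoped Classical

namespace BSpaper

/-- The single Baumslag–Solitar relator `a * b^c * (b^d * a)⁻¹` on two generators
(`true` plays the role of `a`, `false` the role of `b`). -/
def rels (c d : ℕ) : Set (FreeGroup Bool) :=
  {FreeGroup.of true * FreeGroup.of false ^ c * (FreeGroup.of false ^ d * FreeGroup.of true)⁻¹}

/-- The Baumslag–Solitar group `BS(c,d) = ⟨a, b ∣ a b^c = b^d a⟩`. -/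
abbrev Grp (c d : ℕ) := PresentedGroup (rels c d)

variable (c d : ℕ)

/-- The generator `a`. -/
def a : Grp c d := PresentedGroup.of true

/-- The generator `b`. -/
def b : Grp c d := PresentedGroup.of false

/-- The submonoid `P` of `BS(c,d)` generated by `a` and `b`. -/
def P : Submonoid (Grp c d) := Submonoid.closure {a c d, b c d}

/-- The word `b^{s₀} a b^{s₁} a ⋯ b^{s_{k-1}} a` associated to a list of digits `s_i < d`. -/
def wordStem : List (Fin d) → Grp c d
  | [] => 1
  | i :: l => b c d ^ (i : ℕ) * a c d * wordStem l

/-- `Σ_k`: the set of stems of height `k`. -/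
def SigmaSet (k : ℕ) : Set (Grp c d) :=
  {g | ∃ l : List (Fin d), l.length = k ∧ wordStem c d l = g}

/-- The data `(l, t)` of a normal-form decomposition `x = (b^{s₀} a ⋯ b^{s_{k-1}} a) * b^t`,
chosen by choice when it exists (it exists, uniquely, for every `x ∈ P`). -/
noncomputable def nf (x : Grp c d) : List (Fin d) × ℕ :=
  if h : ∃ p : List (Fin d) × ℕ, x = wordStem c d p.1 * b c d ^ p.2 then h.choose else ([], 0)

/-- The stem of `x`, i.e. the stem part of the normal form of `x`. -/
noncomputable def stem (x : Grp c d) : Grp c d := wordStem c d (nf c d x).1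

/-- The left-invariant partial order on `BS(c,d)`: `g ≤ h` iff `g⁻¹ * h ∈ P`. -/
def bsLe (g h : Grp c d) : Prop := g⁻¹ * h ∈ P c d

lemma a_mem_P : a c d ∈ P c d := Submonoid.subset_closure (Set.mem_insert _ _)

lemma b_mem_P : b c d ∈ P c d :=
  Submonoid.subset_closure (Set.mem_insert_of_mem _ rfl)

lemma wordStem_mem_P (l : List (Fin d)) : wordStem c d l ∈ P c d := by
  induction l with
  | nil => exact one_mem _
  | cons i l ih =>
      exact mul_mem (mul_mem (pow_mem (b_mem_P c d) _) (a_mem_P c d)) ih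


lemma bs_rel : a c d * b c d ^ c = b c d ^ d * a c d := by
  have hmem : (FreeGroup.of true * FreeGroup.of false ^ c *
      (FreeGroup.of false ^ d * FreeGroup.of true)⁻¹) ∈ rels c d := rfl
  have h1 : PresentedGroup.mk (rels c d) (FreeGroup.of true * FreeGroup.of false ^ c *
      (FreeGroup.of false ^ d * FreeGroup.of true)⁻¹) = 1 := by
    exact (QuotientGroup.eq_one_iff _).2 (Subgroup.subset_normalClosure hmem)
  have h2 : (a c d * b c d ^ c) * (b c d ^ d * a c d)⁻¹ = 1 := by
    simpa [a, b, PresentedGroup.of] using h1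
  exact mul_inv_eq_one.mp h2
section HNN
open Multiplicative

/-- Hom `ℤ → zpowers (ofAdd n)`, `k ↦ (ofAdd n)^k`. -/
def en (n : ℕ) : Multiplicative ℤ →* Subgroup.zpowers (Multiplicative.ofAdd (n:ℤ)) where
  toFun g := ⟨Multiplicative.ofAdd (n:ℤ) ^ g.toAdd, Subgroup.mem_zpowers_iff.2 ⟨g.toAdd, rfl⟩⟩
  map_one' := by ext; simp
  map_mul' g h := by ext; simp [zpow_add]

lemma en_apply_coe (n : ℕ) (g : Multiplicative ℤ) :
    ((en n g : Subgroup.zpowers (Multiplicative.ofAdd (n:ℤ))) : Multiplicative ℤ)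
      = Multiplicative.ofAdd (n:ℤ) ^ g.toAdd := rfl

lemma en_bij (n : ℕ) (hn : 0 < n) : Function.Bijective (en n) := by
  constructor
  · intro g h hgh
    have h0 : Multiplicative.ofAdd (n:ℤ) ^ g.toAdd = Multiplicative.ofAdd (n:ℤ) ^ h.toAdd := by
      rw [← en_apply_coe, ← en_apply_coe, hgh]
    have h1 : g.toAdd * (n:ℤ) = h.toAdd * (n:ℤ) := by
      have := congrArg Multiplicative.toAdd h0
      simpa [toAdd_zpow, smul_eq_mul] using this
    have h2 : g.toAdd = h.toAdd := mul_right_cancel₀ (by exact_mod_cast hn.ne') h1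
    exact Multiplicative.toAdd.injective h2
  · rintro ⟨x, hx⟩
    rcases Subgroup.mem_zpowers_iff.1 hx with ⟨k, hk⟩
    exact ⟨Multiplicative.ofAdd k, Subtype.ext (by simp [en_apply_coe, hk])⟩

/-- The isomorphism `cℤ ≃ dℤ` sending `ck ↦ dk`. -/
noncomputable def φcd (c d : ℕ) (hc : 0 < c) (hd : 0 < d) :
    Subgroup.zpowers (Multiplicative.ofAdd (c:ℤ)) ≃* Subgroup.zpowers (Multiplicative.ofAdd (d:ℤ)) :=
  (MulEquiv.ofBijective (en c) (en_bij c hc)).symm.trans (MulEquiv.ofBijective (en d) (en_bij d hd))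

lemma φcd_apply (c d : ℕ) (hc : 0 < c) (hd : 0 < d) (k : ℤ)
    (h : Multiplicative.ofAdd (c:ℤ) ^ k ∈ Subgroup.zpowers (Multiplicative.ofAdd (c:ℤ))) :
    (φcd c d hc hd ⟨Multiplicative.ofAdd (c:ℤ) ^ k, h⟩ : Multiplicative ℤ)
      = Multiplicative.ofAdd (d:ℤ) ^ k := by
  have h1 : (MulEquiv.ofBijective (en c) (en_bij c hc)) (Multiplicative.ofAdd k)
      = ⟨Multiplicative.ofAdd (c:ℤ) ^ k, h⟩ := Subtype.ext (by simp [MulEquiv.ofBijective, en_apply_coe]; rfl)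
  have h2 : (MulEquiv.ofBijective (en c) (en_bij c hc)).symm ⟨Multiplicative.ofAdd (c:ℤ) ^ k, h⟩
      = Multiplicative.ofAdd k := by rw [← h1, MulEquiv.symm_apply_apply]
  simp only [φcd, MulEquiv.trans_apply, h2]
  simp [MulEquiv.ofBijective, en_apply_coe]
  rfl

end HNN
section Transversal
open Multiplicative

lemma euclid_unique (n : ℕ) (hn : 0 < n) (z q r : ℤ) (h : z = n*q + r) (h0 : 0 ≤ r)
    (h1 : r < n) : q = z / n ∧ r = z % n := by
  have := (Int.ediv_emod_unique (by exact_mod_cast hn : (0:ℤ) < n)).2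
    ⟨(by rw [h]; ring : r + n * q = z), h0, h1⟩
  exact ⟨this.1.symm, this.2.symm⟩

lemma compl_interval (n : ℕ) (hn : 0 < n) (lo : ℤ) :
    Subgroup.IsComplement (Subgroup.zpowers (Multiplicative.ofAdd (n:ℤ)) : Set (Multiplicative ℤ))
      {g : Multiplicative ℤ | lo ≤ g.toAdd ∧ g.toAdd < lo + n} := by
  rw [Subgroup.isComplement_iff_existsUnique]
  intro g
  set z := g.toAdd with hz
  have hn' : (0:ℤ) < n := by exact_mod_cast hn
  refine ⟨(⟨Multiplicative.ofAdd (n:ℤ) ^ ((z - lo) / n), Subgroup.mem_zpowers_iff.2 ⟨_, rfl⟩⟩,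
      ⟨Multiplicative.ofAdd (lo + (z - lo) % n), ?_, ?_⟩), ?_, ?_⟩
  · simp only [Set.mem_setOf_eq, toAdd_ofAdd]
    have := Int.emod_nonneg (z - lo) hn'.ne'
    omega
  · simp only [Set.mem_setOf_eq, toAdd_ofAdd]
    have := Int.emod_lt_of_pos (z - lo) hn'
    omega
  · show Multiplicative.ofAdd (n:ℤ) ^ ((z - lo) / n) * Multiplicative.ofAdd (lo + (z - lo) % n) = g
    have hdm := Int.mul_ediv_add_emod (z - lo) n
    apply Multiplicative.toAdd.injective
    simp only [toAdd_mul, toAdd_zpow, toAdd_ofAdd, smul_eq_mul]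
    have hcomm : (z - lo) / n * n = n * ((z - lo) / n) := mul_comm _ _
    omega
  · rintro ⟨⟨s, hs⟩, ⟨tr, htr⟩⟩ hprod
    rcases Subgroup.mem_zpowers_iff.1 hs with ⟨k, hk⟩
    simp only [Set.mem_setOf_eq] at htr
    have hzeq : z = n * k + (tr.toAdd) := by
      have := congrArg Multiplicative.toAdd hprod
      simp only [toAdd_mul, ← hk, toAdd_zpow, toAdd_ofAdd, smul_eq_mul] at this
      rw [← hz] at this
      have hcomm : k * (n:ℤ) = n * k := mul_comm _ _
      omega
    have huniq := euclid_unique n hn (z - lo) k (tr.toAdd - lo) (by omega) (by omega) (by omega)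
    have hk2 : k = (z - lo) / n := huniq.1
    have htr2 : tr.toAdd = lo + (z - lo) % n := by omega
    refine Prod.ext (Subtype.ext ?_) (Subtype.ext ?_)
    · simp only [← hk, hk2]
    · apply Multiplicative.toAdd.injective
      simpa using htr2

/-- The transversal pair for the HNN extension: representatives `[0,c)` for `cℤ` and `(-d,0]` for `dℤ`. -/
noncomputable def bsTransversal (c d : ℕ) (hc : 0 < c) (hd : 0 < d) :
    HNNExtension.NormalWord.TransversalPair (Multiplicative ℤ)
      (Subgroup.zpowers (Multiplicative.ofAdd (c:ℤ)))
      (Subgroup.zpowers (Multiplicative.ofAdd (d:ℤ))) where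
  set u := if u = 1 then {g : Multiplicative ℤ | 0 ≤ g.toAdd ∧ g.toAdd < 0 + c}
    else {g : Multiplicative ℤ | (1 - d) ≤ g.toAdd ∧ g.toAdd < (1 - d) + d}
  compl u := by
    rcases Int.units_eq_one_or u with rfl | rfl
    · simpa using compl_interval c hc 0
    · have : ((-1 : ℤˣ) = 1) = False := by simp [Units.ext_iff]
      simpa [this] using compl_interval d hd (1 - d)

end Transversal
section Psi
open Multiplicative HNNExtension

variable (c d : ℕ) (hc : 0 < c) (hd : 0 < d)

local notation "ZZ" => Multiplicative ℤ
local notation "Ac" => Subgroup.zpowers (Multiplicative.ofAdd (c:ℤ))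
local notation "Bd" => Subgroup.zpowers (Multiplicative.ofAdd (d:ℤ))
local notation "HN" => HNNExtension (Multiplicative ℤ)
  (Subgroup.zpowers (Multiplicative.ofAdd (c:ℤ)))
  (Subgroup.zpowers (Multiplicative.ofAdd (d:ℤ))) (φcd c d hc hd)

lemma ofAdd_pow (n : ℕ) : Multiplicative.ofAdd (1:ℤ) ^ n = Multiplicative.ofAdd (n:ℤ) := by
  apply Multiplicative.toAdd.injective
  simp

lemma psi_rel : HNNExtension.t (G := ZZ) (φ := φcd c d hc hd) *
    HNNExtension.of (Multiplicative.ofAdd (1:ℤ)) ^ c =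
    HNNExtension.of (Multiplicative.ofAdd (1:ℤ)) ^ d * HNNExtension.t := by
  have h1 : (HNNExtension.of (Multiplicative.ofAdd (1:ℤ)) : HN) ^ c
      = HNNExtension.of (Multiplicative.ofAdd (c:ℤ)) := by
    rw [← map_pow, ofAdd_pow]
  have h2 : (HNNExtension.of (Multiplicative.ofAdd (1:ℤ)) : HN) ^ d
      = HNNExtension.of (Multiplicative.ofAdd (d:ℤ)) := by
    rw [← map_pow, ofAdd_pow]
  rw [h1, h2]
  have haelt : Multiplicative.ofAdd (c:ℤ) ∈ Ac := Subgroup.mem_zpowers _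
  have := HNNExtension.t_mul_of (φ := φcd c d hc hd) ⟨Multiplicative.ofAdd (c:ℤ), haelt⟩
  rw [this]
  congr 1
  have : (φcd c d hc hd ⟨Multiplicative.ofAdd (c:ℤ), haelt⟩ : ZZ)
      = Multiplicative.ofAdd (d:ℤ) := by
    have h3 : Multiplicative.ofAdd (c:ℤ) ^ (1:ℤ) ∈ Ac := by
      rw [zpow_one]; exact haelt
    have := φcd_apply c d hc hd 1 h3
    simp only [zpow_one] at this
    convert this using 3
  rw [this]

/-- The homomorphism from `BS(c,d)` to the HNN extension. -/
noncomputable def ψ : Grp c d →* HN :=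
  PresentedGroup.toGroup (f := fun x : Bool =>
    if x then HNNExtension.t else HNNExtension.of (Multiplicative.ofAdd (1:ℤ))) (by
  intro r hr
  rcases hr with rfl
  simp only [map_mul, map_inv, map_pow, FreeGroup.lift_apply_of, if_true, if_false]
  rw [mul_inv_eq_one]
  exact psi_rel c d hc hd)

@[simp] lemma psi_a : ψ c d hc hd (a c d) = HNNExtension.t := by
  simp [ψ, a, PresentedGroup.toGroup.of]

@[simp] lemma psi_b : ψ c d hc hd (b c d) = HNNExtension.of (Multiplicative.ofAdd (1:ℤ)) := by
  simp [ψ, b, PresentedGroup.toGroup.of]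

end Psi
section NW
open Multiplicative HNNExtension HNNExtension.NormalWord

variable (c d : ℕ)

local notation "ZZ" => Multiplicative ℤ
local notation "Ac" => Subgroup.zpowers (Multiplicative.ofAdd (c:ℤ))
local notation "Bd" => Subgroup.zpowers (Multiplicative.ofAdd (d:ℤ))

/-- The letter of the normal word corresponding to a digit. -/
def pay (i : Fin d) : ℤˣ × Multiplicative ℤ :=
  ((-1 : ℤˣ), Multiplicative.ofAdd (-(i:ℤ)))

lemma pay_injective : Function.Injective (pay d) := by
  intro i j hij
  have h1 : Multiplicative.ofAdd (-(i:ℤ)) = Multiplicative.ofAdd (-(j:ℤ)) :=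
    congrArg Prod.snd hij
  have h2 : -(i:ℤ) = -(j:ℤ) := congrArg Multiplicative.toAdd h1
  have : (i:ℕ) = (j:ℕ) := by omega
  exact Fin.ext this

lemma chain_aux (L : List (ℤˣ × ZZ)) (h : ∀ p ∈ L, p.1 = -1) :
    L.Chain' (fun p q => p.2 ∈ toSubgroup Ac Bd p.1 → p.1 = q.1) := by
  induction L with
  | nil => exact List.isChain_nil
  | cons p L ih =>
      rw [List.Chain', List.isChain_cons]
      refine ⟨fun q hq _ => ?_, ih (fun q hq => h q (List.mem_cons_of_mem _ hq))⟩
      rw [h p (List.mem_cons_self),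
        h q (List.mem_cons_of_mem _ (List.mem_of_mem_head? hq))]

variable (hc : 0 < c) (hd : 0 < d)

/-- The normal word corresponding to `(wordStem l * b^t)⁻¹`. -/
noncomputable def Wword (l : List (Fin d)) (t : ℕ) : NormalWord (bsTransversal c d hc hd) where
  head := Multiplicative.ofAdd (-(t:ℤ))
  toList := l.reverse.map (pay d)
  mem_set := by
    intro u g hug
    rcases List.mem_map.1 hug with ⟨i, hi, heq⟩
    have hu : u = -1 := (congrArg Prod.fst heq).symm
    have hg : g = Multiplicative.ofAdd (-(i:ℤ)) := (congrArg Prod.snd heq).symm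
    subst hu hg
    have hi2 : (i:ℤ) < d := by exact_mod_cast i.2
    simp only [bsTransversal]
    rw [if_neg (by simp [Units.ext_iff])]
    refine ⟨by simp, by simp; omega⟩
  chain := by
    apply chain_aux
    intro p hp
    rcases List.mem_map.1 hp with ⟨i, _, heq⟩
    exact (congrArg Prod.fst heq).symm

lemma Wword_prod_list (l : List (Fin d)) :
    ((l.reverse.map (pay d)).map
        (fun x => (HNNExtension.t (G := ZZ) (φ := φcd c d hc hd)) ^ (x.1 : ℤ)
          * HNNExtension.of x.2)).prod
      = (ψ c d hc hd (wordStem c d l))⁻¹ := by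
  induction l with
  | nil => simp [wordStem]
  | cons i l ih =>
      rw [List.reverse_cons, List.map_append, List.map_append, List.prod_append, ih]
      have h1 : ψ c d hc hd (wordStem c d (i :: l))
          = HNNExtension.of (Multiplicative.ofAdd ((i:ℤ)))
            * HNNExtension.t * ψ c d hc hd (wordStem c d l) := by
        show ψ c d hc hd (b c d ^ (i:ℕ) * a c d * wordStem c d l) = _
        rw [map_mul, map_mul, map_pow, psi_a, psi_b, ← map_pow, ofAdd_pow]
      rw [h1]
      simp only [List.map_cons, List.map_nil, List.prod_cons, List.prod_nil, mul_one, pay]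
      have h2 : (HNNExtension.t (G := ZZ) (φ := φcd c d hc hd)) ^ (((-1:ℤˣ) : ℤ))
          * HNNExtension.of (Multiplicative.ofAdd (-(i:ℤ)))
          = (HNNExtension.of (Multiplicative.ofAdd ((i:ℤ))) * HNNExtension.t)⁻¹ := by
        rw [mul_inv_rev, ← map_inv]
        simp
      rw [h2, ← mul_inv_rev, mul_assoc]

lemma Wword_prod (l : List (Fin d)) (t : ℕ) :
    (Wword c d hc hd l t).prod (φcd c d hc hd)
      = ψ c d hc hd ((wordStem c d l * b c d ^ t)⁻¹) := by
  have hdef : (Wword c d hc hd l t).prod (φcd c d hc hd)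
      = HNNExtension.of (Multiplicative.ofAdd (-(t:ℤ)))
        * ((l.reverse.map (pay d)).map
          (fun x => (HNNExtension.t (G := ZZ) (φ := φcd c d hc hd)) ^ (x.1 : ℤ)
            * HNNExtension.of x.2)).prod := rfl
  have hb : ψ c d hc hd ((b c d ^ t)⁻¹)
      = HNNExtension.of (G := ZZ) (A := Ac) (B := Bd) (φ := φcd c d hc hd)
        (Multiplicative.ofAdd (-(t:ℤ))) := by
    rw [map_inv, map_pow, psi_b, ← map_pow, ofAdd_pow, ← map_inv]
    simp
  calc (Wword c d hc hd l t).prod (φcd c d hc hd)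
      = HNNExtension.of (Multiplicative.ofAdd (-(t:ℤ)))
        * (ψ c d hc hd (wordStem c d l))⁻¹ := by rw [hdef, Wword_prod_list c d hc hd l]
    _ = ψ c d hc hd ((b c d ^ t)⁻¹) * ψ c d hc hd ((wordStem c d l)⁻¹) := by
        rw [hb, map_inv]
    _ = ψ c d hc hd ((wordStem c d l * b c d ^ t)⁻¹) := by rw [← map_mul, mul_inv_rev]

end NW

/-- Uniqueness of the normal form in `P`. -/
theorem stem_unique (hc : 0 < c) (hd : 0 < d) (l l' : List (Fin d)) (t t' : ℕ)
    (h : wordStem c d l * b c d ^ t = wordStem c d l' * b c d ^ t') : l = l' ∧ t = t' := by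
  have h1 : (Wword c d hc hd l t).prod (φcd c d hc hd)
      = (Wword c d hc hd l' t').prod (φcd c d hc hd) := by
    rw [Wword_prod, Wword_prod, h]
  have h2 := HNNExtension.NormalWord.prod_injective (φ := φcd c d hc hd) (d := bsTransversal c d hc hd) h1
  have hhead : Multiplicative.ofAdd (-(t:ℤ)) = Multiplicative.ofAdd (-(t':ℤ)) :=
    congrArg (fun w : HNNExtension.NormalWord (bsTransversal c d hc hd) => w.head) h2
  have hlist : l.reverse.map (pay d) = l'.reverse.map (pay d) :=
    congrArg (fun w : HNNExtension.NormalWord (bsTransversal c d hc hd) => w.toList) h2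
  constructor
  · exact List.reverse_injective (List.map_injective_iff.2 (pay_injective d) hlist)
  · have h3 : -(t:ℤ) = -(t':ℤ) := congrArg Multiplicative.toAdd hhead
    omega

section Monoid

variable (c d : ℕ)

lemma b_pow_d_mul_a (q : ℕ) : b c d ^ (d * q) * a c d = a c d * b c d ^ (c * q) := by
  induction q with
  | zero => simp
  | succ q ih =>
      have : d * (q + 1) = d * q + d := by ring
      rw [this, pow_add, mul_assoc, ← bs_rel, ← mul_assoc, ih, mul_assoc, ← pow_add,
        show c * q + c = c * (q + 1) by ring]

lemma wordStem_append (l l' : List (Fin d)) :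
    wordStem c d (l ++ l') = wordStem c d l * wordStem c d l' := by
  induction l with
  | nil => simp [wordStem]
  | cons i l ih => simp [wordStem, ih, mul_assoc]

lemma pushB (hd : 0 < d) : ∀ (l : List (Fin d)) (s : ℕ), ∃ (l' : List (Fin d)) (t : ℕ),
    l'.length = l.length ∧ b c d ^ s * wordStem c d l = wordStem c d l' * b c d ^ t := by
  intro l
  induction l with
  | nil => exact fun s => ⟨[], s, rfl, by simp [wordStem]⟩
  | cons i l ih =>
      intro s
      obtain ⟨l'', t'', hlen, hl⟩ := ih (c * ((s + (i:ℕ)) / d))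
      refine ⟨⟨(s + (i:ℕ)) % d, Nat.mod_lt _ hd⟩ :: l'', t'', by simp [hlen], ?_⟩
      have key : b c d ^ (s + (i:ℕ)) * a c d
          = b c d ^ ((s + (i:ℕ)) % d) * a c d * b c d ^ (c * ((s + (i:ℕ)) / d)) := by
        conv_lhs => rw [show s + (i:ℕ) = ((s + (i:ℕ)) % d) + d * ((s + (i:ℕ)) / d) by
          have := Nat.div_add_mod (s + (i:ℕ)) d; omega]
        rw [pow_add, mul_assoc, b_pow_d_mul_a, ← mul_assoc]
      calc b c d ^ s * wordStem c d (i :: l)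
          = b c d ^ s * (b c d ^ (i:ℕ) * a c d * wordStem c d l) := rfl
        _ = (b c d ^ (s + (i:ℕ)) * a c d) * wordStem c d l := by rw [pow_add]; group
        _ = b c d ^ ((s + (i:ℕ)) % d) * a c d
            * (b c d ^ (c * ((s + (i:ℕ)) / d)) * wordStem c d l) := by rw [key]; group
        _ = b c d ^ ((s + (i:ℕ)) % d) * a c d * (wordStem c d l'' * b c d ^ t'') := by rw [hl]
        _ = wordStem c d (⟨(s + (i:ℕ)) % d, Nat.mod_lt _ hd⟩ :: l'') * b c d ^ t'' := by
            show _ = b c d ^ ((s + (i:ℕ)) % d) * a c d * wordStem c d l'' * b c d ^ t''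
            group

lemma nf_exists (hd : 0 < d) : ∀ p ∈ P c d, ∃ (l : List (Fin d)) (t : ℕ),
    p = wordStem c d l * b c d ^ t := by
  intro p hp
  induction hp using Submonoid.closure_induction with
  | mem g hg =>
      rcases hg with rfl | rfl
      · exact ⟨[⟨0, hd⟩], 0, by simp [wordStem]⟩
      · exact ⟨[], 1, by simp [wordStem]⟩
  | one => exact ⟨[], 0, by simp [wordStem]⟩
  | mul p q _ _ hp hq =>
      obtain ⟨l, s, rfl⟩ := hp
      obtain ⟨m, u, rfl⟩ := hq
      obtain ⟨m', t', hlen, hpush⟩ := pushB c d hd m s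
      refine ⟨l ++ m', t' + u, ?_⟩
      rw [wordStem_append, pow_add]
      calc wordStem c d l * b c d ^ s * (wordStem c d m * b c d ^ u)
          = wordStem c d l * (b c d ^ s * wordStem c d m) * b c d ^ u := by group
        _ = wordStem c d l * (wordStem c d m' * b c d ^ t') * b c d ^ u := by rw [hpush]
        _ = wordStem c d l * wordStem c d m' * (b c d ^ t' * b c d ^ u) := by group

lemma lemE (hd : 0 < d) : ∀ (l : List (Fin d)) (r : ℕ), ∃ (p' : Grp c d) (R : ℕ),
    p' ∈ P c d ∧ (b c d ^ r)⁻¹ * wordStem c d l = p' * (b c d ^ R)⁻¹ := by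
  intro l
  induction l with
  | nil => exact fun r => ⟨1, r, one_mem _, by simp [wordStem]⟩
  | cons i l ih =>
      intro r
      by_cases hri : r ≤ (i:ℕ)
      · refine ⟨b c d ^ ((i:ℕ) - r) * a c d * wordStem c d l, 0,
          mul_mem (mul_mem (pow_mem (b_mem_P c d) _) (a_mem_P c d)) (wordStem_mem_P c d l), ?_⟩
        show (b c d ^ r)⁻¹ * (b c d ^ (i:ℕ) * a c d * wordStem c d l) = _
        have hbi : b c d ^ (i:ℕ) = b c d ^ r * b c d ^ ((i:ℕ) - r) := by
          rw [← pow_add]; congr 1; omega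
        rw [hbi, pow_zero]
        group
      · set r' := r - (i:ℕ) with hr'
        set q := r' with hq
        have hdq : r' ≤ d * q := by
          rw [hq]; exact Nat.le_mul_of_pos_left _ hd
        obtain ⟨p'', R'', hp'', hrec⟩ := ih (c * q)
        refine ⟨b c d ^ (d * q - r') * a c d * p'', R'',
          mul_mem (mul_mem (pow_mem (b_mem_P c d) _) (a_mem_P c d)) hp'', ?_⟩
        have key : b c d ^ r' * (b c d ^ (d * q - r') * a c d * (b c d ^ (c * q))⁻¹)
            = a c d := by
          calc b c d ^ r' * (b c d ^ (d * q - r') * a c d * (b c d ^ (c * q))⁻¹)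
              = (b c d ^ r' * b c d ^ (d * q - r')) * a c d * (b c d ^ (c * q))⁻¹ := by group
            _ = b c d ^ (d * q) * a c d * (b c d ^ (c * q))⁻¹ := by
                rw [← pow_add]; congr 3; omega
            _ = a c d * b c d ^ (c * q) * (b c d ^ (c * q))⁻¹ := by rw [b_pow_d_mul_a]
            _ = a c d := by group
        have keyinv : (b c d ^ r')⁻¹ * a c d
            = b c d ^ (d * q - r') * a c d * (b c d ^ (c * q))⁻¹ := by
          rw [inv_mul_eq_iff_eq_mul, key]
        calc (b c d ^ r)⁻¹ * wordStem c d (i :: l)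
            = (b c d ^ r)⁻¹ * (b c d ^ (i:ℕ) * a c d * wordStem c d l) := rfl
          _ = (b c d ^ r')⁻¹ * a c d * wordStem c d l := by
              rw [show b c d ^ r = b c d ^ (i:ℕ) * b c d ^ r' by rw [← pow_add]; congr 1; omega]
              group
          _ = b c d ^ (d * q - r') * a c d * ((b c d ^ (c * q))⁻¹ * wordStem c d l) := by
              rw [keyinv]; group
          _ = b c d ^ (d * q - r') * a c d * (p'' * (b c d ^ R'')⁻¹) := by rw [hrec]
          _ = b c d ^ (d * q - r') * a c d * p'' * (b c d ^ R'')⁻¹ := by group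

end Monoid
section Final

variable (c d : ℕ)

lemma theta_wordStem (θ : Grp c d →* Multiplicative ℤ)
    (hθa : θ (a c d) = Multiplicative.ofAdd 1) (hθb : θ (b c d) = 1) (l : List (Fin d)) :
    θ (wordStem c d l) = Multiplicative.ofAdd (l.length : ℤ) := by
  induction l with
  | nil => simp [wordStem]
  | cons i l ih =>
      show θ (b c d ^ (i:ℕ) * a c d * wordStem c d l) = _
      rw [map_mul, map_mul, map_pow, hθa, hθb, ih, one_pow, one_mul, ← ofAdd_add]
      congr 1
      simp only [List.length_cons]
      push_cast
      ring

lemma theta_nf (θ : Grp c d →* Multiplicative ℤ)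
    (hθa : θ (a c d) = Multiplicative.ofAdd 1) (hθb : θ (b c d) = 1) (l : List (Fin d)) (t : ℕ) :
    Multiplicative.toAdd (θ (wordStem c d l * b c d ^ t)) = l.length := by
  rw [map_mul, map_pow, hθb, theta_wordStem c d θ hθa hθb, one_pow, mul_one, toAdd_ofAdd]

lemma stem_prefix (hc : 0 < c) (hd : 0 < d) (u w : Grp c d) (hq : u⁻¹ * w ∈ P c d)
    (lu lw : List (Fin d)) (su m : ℕ)
    (hu_eq : u = wordStem c d lu * b c d ^ su) (hw_eq : w = wordStem c d lw * b c d ^ m) :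
    lu <+: lw := by
  obtain ⟨lq, sq, hq_eq⟩ := nf_exists c d hd _ hq
  obtain ⟨lq2, t2, hlen, hpush⟩ := pushB c d hd lq su
  have hw2 : wordStem c d lw * b c d ^ m = wordStem c d (lu ++ lq2) * b c d ^ (t2 + sq) := by
    have hw3 : w = u * (u⁻¹ * w) := by group
    rw [← hw_eq, hw3, hq_eq, hu_eq, wordStem_append, pow_add]
    calc wordStem c d lu * b c d ^ su * (wordStem c d lq * b c d ^ sq)
        = wordStem c d lu * (b c d ^ su * wordStem c d lq) * b c d ^ sq := by group
      _ = wordStem c d lu * (wordStem c d lq2 * b c d ^ t2) * b c d ^ sq := by rw [hpush]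
      _ = wordStem c d lu * wordStem c d lq2 * (b c d ^ t2 * b c d ^ sq) := by group
  obtain ⟨hl, -⟩ := stem_unique c d hc hd lw (lu ++ lq2) m (t2 + sq) hw2
  exact hl ▸ ⟨lq2, rfl⟩

end Final

/-- If x, y ∈ P have a common upper bound in P and z ∈ P is a least upper bound of
x and y, and if θ(y) > θ(x), then z = y·b^t for some t ∈ ℕ. -/
theorem statement4 (c d : ℕ) (hc : 0 < c) (hd : 0 < d)
    (θ : Grp c d →* Multiplicative ℤ)
    (hθa : θ (a c d) = Multiplicative.ofAdd 1) (hθb : θ (b c d) = 1)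
    (x y z : Grp c d) (hx : x ∈ P c d) (hy : y ∈ P c d) (hz : z ∈ P c d)
    (hub : ∃ w ∈ P c d, bsLe c d x w ∧ bsLe c d y w)
    (hxz : bsLe c d x z) (hyz : bsLe c d y z)
    (hlub : ∀ w ∈ P c d, bsLe c d x w → bsLe c d y w → bsLe c d z w)
    (hθ : Multiplicative.toAdd (θ x) < Multiplicative.toAdd (θ y)) :
    ∃ t : ℕ, z = y * b c d ^ t := by
  classical
  obtain ⟨lx, sx, hx_eq⟩ := nf_exists c d hd x hx
  obtain ⟨ly, sy, hy_eq⟩ := nf_exists c d hd y hy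
  obtain ⟨w, hw, hxw, hyw⟩ := hub
  obtain ⟨lw, m, hw_eq⟩ := nf_exists c d hd w hw
  have hpx : lx <+: lw := stem_prefix c d hc hd x w hxw lx lw sx m hx_eq hw_eq
  have hpy : ly <+: lw := stem_prefix c d hc hd y w hyw ly lw sy m hy_eq hw_eq
  have hθx : Multiplicative.toAdd (θ x) = lx.length := by
    rw [hx_eq]; exact theta_nf c d θ hθa hθb lx sx
  have hθy : Multiplicative.toAdd (θ y) = ly.length := by
    rw [hy_eq]; exact theta_nf c d θ hθa hθb ly sy
  have hlen : lx.length < ly.length := by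
    rw [hθx, hθy] at hθ; exact_mod_cast hθ
  obtain ⟨lmid, hmid⟩ := List.prefix_of_prefix_length_le hpx hpy hlen.le
  -- `y = wordStem lx * wordStem lmid * b ^ sy`
  have hy_eq2 : y = wordStem c d lx * wordStem c d lmid * b c d ^ sy := by
    rw [hy_eq, ← hmid, wordStem_append]
  obtain ⟨p', R, hp', hE⟩ := lemE c d hd lmid sx
  -- `y * b ^ R` is a common upper bound of `x` and `y`
  have hxyR : bsLe c d x (y * b c d ^ R) := by
    show x⁻¹ * (y * b c d ^ R) ∈ P c d
    have hcalc : x⁻¹ * (y * b c d ^ R) = p' * b c d ^ sy := by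
      calc x⁻¹ * (y * b c d ^ R)
          = (wordStem c d lx * b c d ^ sx)⁻¹
            * (wordStem c d lx * wordStem c d lmid * b c d ^ sy * b c d ^ R) := by
            rw [← hx_eq, ← hy_eq2]
        _ = (b c d ^ sx)⁻¹ * wordStem c d lmid * (b c d ^ sy * b c d ^ R) := by group
        _ = (b c d ^ sx)⁻¹ * wordStem c d lmid * (b c d ^ R * b c d ^ sy) := by
            rw [← pow_add, ← pow_add, add_comm]
        _ = p' * (b c d ^ R)⁻¹ * (b c d ^ R * b c d ^ sy) := by
            rw [hE]
        _ = p' * b c d ^ sy := by group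
    rw [hcalc]
    exact mul_mem hp' (pow_mem (b_mem_P c d) _)
  have hyyR : bsLe c d y (y * b c d ^ R) := by
    show y⁻¹ * (y * b c d ^ R) ∈ P c d
    have : y⁻¹ * (y * b c d ^ R) = b c d ^ R := by group
    rw [this]
    exact pow_mem (b_mem_P c d) _
  have hzyR : bsLe c d z (y * b c d ^ R) :=
    hlub (y * b c d ^ R) (mul_mem hy (pow_mem (b_mem_P c d) _)) hxyR hyyR
  -- now count heights
  obtain ⟨lp, tp, hp_eq⟩ := nf_exists c d hd _ hyz
  obtain ⟨lq, tq, hq_eq⟩ := nf_exists c d hd _ hzyR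
  have hsum : (y⁻¹ * z) * (z⁻¹ * (y * b c d ^ R)) = b c d ^ R := by group
  have hθsum : (lp.length : ℤ) + lq.length = 0 := by
    have h1 := theta_nf c d θ hθa hθb lp tp
    have h2 := theta_nf c d θ hθa hθb lq tq
    rw [← hp_eq] at h1
    rw [← hq_eq] at h2
    have h3 : θ ((y⁻¹ * z) * (z⁻¹ * (y * b c d ^ R))) = 1 := by
      rw [hsum, map_pow, hθb, one_pow]
    rw [map_mul] at h3
    have h4 := congrArg Multiplicative.toAdd h3
    rw [toAdd_mul, h1, h2] at h4
    simpa using h4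
  have hlp : lp = [] := by
    have : lp.length = 0 := by omega
    exact List.length_eq_zero_iff.mp this
  refine ⟨tp, ?_⟩
  have : y⁻¹ * z = b c d ^ tp := by
    rw [hp_eq, hlp]
    show wordStem c d [] * b c d ^ tp = b c d ^ tp
    rw [show wordStem c d [] = 1 from rfl, one_mul]
  rw [← this]
  group

end BSpaper
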